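/- Let μ, ν, γ be discrete probability measures on finite metric spaces with fixed roots r_x, r_y, r_z respectively. Then the aligned-root FlowAlign discrepancy satisfies the triangle inequality: Â_f(μ,γ; r_x,r_y) ≤ Â_f(μ,ν; r_x,r_z) + Â_f(ν,γ; r_y,r_z). -/
import Mathlib


open Finset

noncomputable section

/-- The set of couplings (transport plans) between two finite weight vectors. -/
def couplings {k k' : ℕ} (a : Fin k → ℝ) (b : Fin k' → ℝ) : Set (Fin k → Fin k' → ℝ) :=
  {T | (∀ i j, 0 ≤ T i j) ∧ (∀ i, ∑ j, T i j = a i) ∧ (∀ j, ∑ i, T i j = b j)}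

/-- Optimal transport cost between weight vectors `a`, `b` for a cost matrix `c`. -/
def otCost {k k' : ℕ} (c : Fin k → Fin k' → ℝ) (a : Fin k → ℝ) (b : Fin k' → ℝ) : ℝ :=
  sInf {v | ∃ T ∈ couplings a b, v = ∑ i, ∑ j, c i j * T i j}

/-- Squared aligned-root FlowAlign discrepancy. -/
def flowAlignSq {TX TZ : Type*} [MetricSpace TX] [MetricSpace TZ] {k k' : ℕ}
    (a : Fin k → ℝ) (b : Fin k' → ℝ) (x : Fin k → TX) (z : Fin k' → TZ)
    (rx : TX) (rz : TZ) : ℝ :=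
  otCost (fun i j => (dist rx (x i) - dist rz (z j)) ^ 2) a b

/-- Aligned-root FlowAlign discrepancy `Â_f`. -/
def alignedFlowAlign {TX TZ : Type*} [MetricSpace TX] [MetricSpace TZ] {k k' : ℕ}
    (a : Fin k → ℝ) (b : Fin k' → ℝ) (x : Fin k → TX) (z : Fin k' → TZ)
    (rx : TX) (rz : TZ) : ℝ :=
  Real.sqrt (flowAlignSq a b x z rx rz)

/-- Triple product sum as iterated sums. -/
lemma sum_triple {α β γ : Type*} [Fintype α] [Fintype β] [Fintype γ] (F : α × β × γ → ℝ) :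
    ∑ t : α × β × γ, F t = ∑ i, ∑ j, ∑ j', F (i, j, j') := by
  rw [Fintype.sum_prod_type]
  exact Finset.sum_congr rfl fun i _ => Fintype.sum_prod_type _

/-- Weighted Minkowski-type inequality. -/
lemma weighted_minkowski {ι : Type*} (s : Finset ι) (w f g : ι → ℝ) (hw : ∀ t, 0 ≤ w t) :
    ∑ t ∈ s, w t * (f t + g t) ^ 2 ≤
      (Real.sqrt (∑ t ∈ s, w t * f t ^ 2) + Real.sqrt (∑ t ∈ s, w t * g t ^ 2)) ^ 2 := by
  have hF : (0:ℝ) ≤ ∑ t ∈ s, w t * f t ^ 2 :=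
    Finset.sum_nonneg fun t _ => mul_nonneg (hw t) (sq_nonneg _)
  have hG : (0:ℝ) ≤ ∑ t ∈ s, w t * g t ^ 2 :=
    Finset.sum_nonneg fun t _ => mul_nonneg (hw t) (sq_nonneg _)
  have cs : ∑ t ∈ s, w t * (f t * g t) ≤
      Real.sqrt (∑ t ∈ s, w t * f t ^ 2) * Real.sqrt (∑ t ∈ s, w t * g t ^ 2) := by
    have := Real.sum_mul_le_sqrt_mul_sqrt s
      (fun t => Real.sqrt (w t) * f t) (fun t => Real.sqrt (w t) * g t)
    have e1 : ∀ t, (Real.sqrt (w t) * f t) * (Real.sqrt (w t) * g t) = w t * (f t * g t) := by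
      intro t
      rw [mul_mul_mul_comm, Real.mul_self_sqrt (hw t)]
    have e2 : ∀ t, (Real.sqrt (w t) * f t) ^ 2 = w t * f t ^ 2 := by
      intro t; rw [mul_pow, Real.sq_sqrt (hw t)]
    have e3 : ∀ t, (Real.sqrt (w t) * g t) ^ 2 = w t * g t ^ 2 := by
      intro t; rw [mul_pow, Real.sq_sqrt (hw t)]
    simpa only [e1, e2, e3] using this
  have expand : ∑ t ∈ s, w t * (f t + g t) ^ 2 =
      (∑ t ∈ s, w t * f t ^ 2) + 2 * (∑ t ∈ s, w t * (f t * g t)) + ∑ t ∈ s, w t * g t ^ 2 := by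
    rw [Finset.mul_sum, ← Finset.sum_add_distrib, ← Finset.sum_add_distrib]
    exact Finset.sum_congr rfl fun t _ => by ring
  rw [expand, add_sq, Real.sq_sqrt hF, Real.sq_sqrt hG]
  nlinarith [cs]

/-- Elements of the OT cost set with nonnegative cost are nonnegative. -/
lemma otSet_nonneg {k k' : ℕ} {c : Fin k → Fin k' → ℝ} (hc : ∀ i j, 0 ≤ c i j)
    {a : Fin k → ℝ} {b : Fin k' → ℝ} {v : ℝ}
    (hv : v ∈ {v | ∃ T ∈ couplings a b, v = ∑ i, ∑ j, c i j * T i j}) : 0 ≤ v := by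
  obtain ⟨T, hT, rfl⟩ := hv
  exact Finset.sum_nonneg fun i _ => Finset.sum_nonneg fun j _ =>
    mul_nonneg (hc i j) (hT.1 i j)

/-- The product coupling. -/
lemma prod_coupling_mem {k k' : ℕ} {a : Fin k → ℝ} {b : Fin k' → ℝ}
    (ha : ∀ i, 0 ≤ a i) (hb : ∀ j, 0 ≤ b j) (ha1 : ∑ i, a i = 1) (hb1 : ∑ j, b j = 1) :
    (fun i j => a i * b j) ∈ couplings a b := by
  refine ⟨fun i j => mul_nonneg (ha i) (hb j), fun i => ?_, fun j => ?_⟩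
  · rw [← Finset.mul_sum, hb1, mul_one]
  · rw [← Finset.sum_mul, ha1, one_mul]

/-- Triangle inequality for the aligned-root FlowAlign discrepancy:
`Â_f(μ,γ;r_x,r_y) ≤ Â_f(μ,ν;r_x,r_z) + Â_f(ν,γ;r_y,r_z)` for discrete probability
measures `μ` on `TX` (root `rx`), `ν` on `TZ` (root `rz`), `γ` on `TY` (root `ry`). -/
theorem stmt_2 {TX TY TZ : Type*} [MetricSpace TX] [MetricSpace TY] [MetricSpace TZ]
    [Fintype TX] [Fintype TY] [Fintype TZ]
    {k l m : ℕ}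
    (a : Fin k → ℝ) (b : Fin l → ℝ) (c : Fin m → ℝ)
    (x : Fin k → TX) (z : Fin l → TZ) (y : Fin m → TY)
    (rx : TX) (rz : TZ) (ry : TY)
    (ha : ∀ i, 0 ≤ a i) (hb : ∀ j, 0 ≤ b j) (hc : ∀ j, 0 ≤ c j)
    (ha1 : ∑ i, a i = 1) (hb1 : ∑ j, b j = 1) (hc1 : ∑ j, c j = 1) :
    alignedFlowAlign a c x y rx ry
      ≤ alignedFlowAlign a b x z rx rz + alignedFlowAlign b c z y rz ry := by
  classical
  set u : Fin k → ℝ := fun i => dist rx (x i) with hu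
  set vd : Fin l → ℝ := fun j => dist rz (z j) with hvd
  set wd : Fin m → ℝ := fun j => dist ry (y j) with hwd
  set S : Set ℝ := {v | ∃ T ∈ couplings a c,
    v = ∑ i, ∑ j, (fun i j => (dist rx (x i) - dist ry (y j)) ^ 2) i j * T i j} with hS
  set S1 : Set ℝ := {v | ∃ T ∈ couplings a b,
    v = ∑ i, ∑ j, (fun i j => (dist rx (x i) - dist rz (z j)) ^ 2) i j * T i j} with hS1
  set S2 : Set ℝ := {v | ∃ T ∈ couplings b c,
    v = ∑ i, ∑ j, (fun i j => (dist rz (z i) - dist ry (y j)) ^ 2) i j * T i j} with hS2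
  have hSnn : ∀ v ∈ S, (0:ℝ) ≤ v := fun v hv =>
    otSet_nonneg (fun i j => sq_nonneg _) hv
  have hS1nn : ∀ v ∈ S1, (0:ℝ) ≤ v := fun v hv =>
    otSet_nonneg (fun i j => sq_nonneg _) hv
  have hS2nn : ∀ v ∈ S2, (0:ℝ) ≤ v := fun v hv =>
    otSet_nonneg (fun i j => sq_nonneg _) hv
  have hSbdd : BddBelow S := ⟨0, fun v hv => hSnn v hv⟩
  have hS1bdd : BddBelow S1 := ⟨0, fun v hv => hS1nn v hv⟩
  have hS2bdd : BddBelow S2 := ⟨0, fun v hv => hS2nn v hv⟩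
  have hS1ne : S1.Nonempty := ⟨_, ⟨_, prod_coupling_mem ha hb ha1 hb1, rfl⟩⟩
  have hS2ne : S2.Nonempty := ⟨_, ⟨_, prod_coupling_mem hb hc hb1 hc1, rfl⟩⟩
  -- the key estimate
  have key : ∀ v1 ∈ S1, ∀ v2 ∈ S2,
      Real.sqrt (sInf S) ≤ Real.sqrt v1 + Real.sqrt v2 := by
    rintro v1 ⟨T1, hT1, rfl⟩ v2 ⟨T2, hT2, rfl⟩
    set P : Fin k → Fin l → Fin m → ℝ :=
      fun i j j' => if b j = 0 then 0 else T1 i j * T2 j j' / b j with hP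
    have hP0 : ∀ i j j', 0 ≤ P i j j' := by
      intro i j j'
      by_cases h : b j = 0
      · simp [hP, h]
      · simp only [hP, h, if_false]
        exact div_nonneg (mul_nonneg (hT1.1 i j) (hT2.1 j j')) (hb j)
    have hT1z : ∀ i j, b j = 0 → T1 i j = 0 := by
      intro i j hj
      have hsum : ∑ i, T1 i j = 0 := (hT1.2.2 j).trans hj
      exact (Finset.sum_eq_zero_iff_of_nonneg (fun i _ => hT1.1 i j)).mp hsum i (mem_univ i)
    have hT2z : ∀ j j', b j = 0 → T2 j j' = 0 := by
      intro j j' hj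
      have hsum : ∑ j', T2 j j' = 0 := (hT2.2.1 j).trans hj
      exact (Finset.sum_eq_zero_iff_of_nonneg (fun j' _ => hT2.1 j j')).mp hsum j' (mem_univ j')
    have hPj' : ∀ i j, ∑ j', P i j j' = T1 i j := by
      intro i j
      by_cases h : b j = 0
      · simp [hP, h, hT1z i j h]
      · simp only [hP, h, if_false]
        rw [show ∀ (s : Fin m → ℝ), (∑ j', T1 i j * s j' / b j) = T1 i j * (∑ j', s j') / b j
          from fun s => by rw [Finset.mul_sum, Finset.sum_div], hT2.2.1 j,
          mul_div_assoc, div_self h, mul_one]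
    have hPi : ∀ j j', ∑ i, P i j j' = T2 j j' := by
      intro j j'
      by_cases h : b j = 0
      · simp [hP, h, hT2z j j' h]
      · simp only [hP, h, if_false]
        rw [show (∑ i, T1 i j * T2 j j' / b j) = (∑ i, T1 i j) * T2 j j' / b j
          from by rw [Finset.sum_mul, Finset.sum_div], hT1.2.2 j,
          mul_comm, mul_div_assoc, div_self h, mul_one]
    set T : Fin k → Fin m → ℝ := fun i j' => ∑ j, P i j j' with hT
    have hTmem : T ∈ couplings a c := by
      refine ⟨fun i j' => Finset.sum_nonneg fun j _ => hP0 i j j', fun i => ?_, fun j' => ?_⟩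
      · rw [Finset.sum_comm]
        calc ∑ j, ∑ j', P i j j' = ∑ j, T1 i j := by
              exact Finset.sum_congr rfl fun j _ => hPj' i j
          _ = a i := hT1.2.1 i
      · rw [Finset.sum_comm]
        calc ∑ j, ∑ i, P i j j' = ∑ j, T2 j j' := by
              exact Finset.sum_congr rfl fun j _ => hPi j j'
          _ = c j' := hT2.2.2 j'
    -- cost of the glued coupling
    have costT : (∑ i, ∑ j', (u i - wd j') ^ 2 * T i j')
        = ∑ t : Fin k × Fin l × Fin m,
            P t.1 t.2.1 t.2.2 * ((u t.1 - vd t.2.1) + (vd t.2.1 - wd t.2.2)) ^ 2 := by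
      rw [sum_triple]
      refine Finset.sum_congr rfl fun i _ => ?_
      rw [Finset.sum_comm]
      refine Finset.sum_congr rfl fun j' _ => ?_
      rw [show T i j' = ∑ j, P i j j' from rfl, Finset.mul_sum]
      exact Finset.sum_congr rfl fun j _ => by ring
    have costA : (∑ t : Fin k × Fin l × Fin m,
          P t.1 t.2.1 t.2.2 * (u t.1 - vd t.2.1) ^ 2)
        = ∑ i, ∑ j, (u i - vd j) ^ 2 * T1 i j := by
      rw [sum_triple]
      refine Finset.sum_congr rfl fun i _ => ?_
      refine Finset.sum_congr rfl fun j _ => ?_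
      dsimp only
      rw [← Finset.sum_mul, hPj' i j, mul_comm]
    have costB : (∑ t : Fin k × Fin l × Fin m,
          P t.1 t.2.1 t.2.2 * (vd t.2.1 - wd t.2.2) ^ 2)
        = ∑ j, ∑ j', (vd j - wd j') ^ 2 * T2 j j' := by
      rw [sum_triple, Finset.sum_comm]
      refine Finset.sum_congr rfl fun j _ => ?_
      rw [Finset.sum_comm]
      refine Finset.sum_congr rfl fun j' _ => ?_
      dsimp only
      rw [← Finset.sum_mul, hPi j j', mul_comm]
    have mink := weighted_minkowski (Finset.univ : Finset (Fin k × Fin l × Fin m))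
      (fun t => P t.1 t.2.1 t.2.2) (fun t => u t.1 - vd t.2.1) (fun t => vd t.2.1 - wd t.2.2)
      (fun t => hP0 t.1 t.2.1 t.2.2)
    rw [costA, costB] at mink
    have hmemS : (∑ i, ∑ j', (u i - wd j') ^ 2 * T i j') ∈ S := ⟨T, hTmem, rfl⟩
    have h1 : sInf S ≤ ∑ i, ∑ j', (u i - wd j') ^ 2 * T i j' := csInf_le hSbdd hmemS
    have h2 : sInf S ≤ (Real.sqrt (∑ i, ∑ j, (u i - vd j) ^ 2 * T1 i j)
        + Real.sqrt (∑ j, ∑ j', (vd j - wd j') ^ 2 * T2 j j')) ^ 2 := by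
      refine h1.trans ?_
      rw [costT]
      exact mink
    calc Real.sqrt (sInf S) ≤ Real.sqrt ((Real.sqrt (∑ i, ∑ j, (u i - vd j) ^ 2 * T1 i j)
          + Real.sqrt (∑ j, ∑ j', (vd j - wd j') ^ 2 * T2 j j')) ^ 2) := Real.sqrt_le_sqrt h2
      _ = _ := Real.sqrt_sq (by positivity)
  -- now pass to infima using continuity and monotonicity of sqrt
  have sqrtmono : Monotone Real.sqrt := fun a b h => Real.sqrt_le_sqrt h
  have himg1 : Real.sqrt (sInf S1) = sInf (Real.sqrt '' S1) :=
    sqrtmono.map_csInf_of_continuousAt (Real.continuous_sqrt.continuousAt) hS1ne hS1bdd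
  have himg2 : Real.sqrt (sInf S2) = sInf (Real.sqrt '' S2) :=
    sqrtmono.map_csInf_of_continuousAt (Real.continuous_sqrt.continuousAt) hS2ne hS2bdd
  have goal : Real.sqrt (sInf S) ≤ sInf (Real.sqrt '' S1) + sInf (Real.sqrt '' S2) := by
    rw [← sub_le_iff_le_add']
    refine le_csInf (hS2ne.image _) ?_
    rintro w2 ⟨v2, hv2, rfl⟩
    rw [sub_le_comm]
    refine le_csInf (hS1ne.image _) ?_
    rintro w1 ⟨v1, hv1, rfl⟩
    rw [sub_le_iff_le_add]
    exact key v1 hv1 v2 hv2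
  show Real.sqrt (otCost _ a c) ≤ Real.sqrt (otCost _ a b) + Real.sqrt (otCost _ b c)
  rw [otCost, otCost, otCost]
  calc Real.sqrt (sInf S) ≤ sInf (Real.sqrt '' S1) + sInf (Real.sqrt '' S2) := goal
    _ = Real.sqrt (sInf S1) + Real.sqrt (sInf S2) := by rw [himg1, himg2]
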